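/- With F = M × X as above, for all (a,i),(b,j),(c,k) ∈ F: L_{(a,i)} L_{(b,j)}^{-1} ((c,k)) = (c + (1−t)·(a−b) + e_i − e_j, k). In particular the displacement group of F acts freely on F, and on each fiber M × {k} the action is by translations of M. -/

import Mathlib

open LaurentPolynomial

/-- The standard basis vectors `e_i` of `⊕_{x ∈ X∖{z}} ℤ[t,t⁻¹]`, with `e_z = 0`. -/
noncomputable def freeMQ.e {X : Type*} [DecidableEq X] (z : X) (i : X) :
    {x : X // x ≠ z} →₀ LaurentPolynomial ℤ :=
  if h : i = z then 0 else Finsupp.single ⟨i, h⟩ 1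

/-- The operation `(a,i) * (b,j) = ((1-t)·a + t·b + e_i - e_j, j)` on `M × X`. -/
noncomputable def freeMQ.op {X : Type*} [DecidableEq X] (z : X)
    (p q : ({x : X // x ≠ z} →₀ LaurentPolynomial ℤ) × X) :
    ({x : X // x ≠ z} →₀ LaurentPolynomial ℤ) × X :=
  (((1 - T 1 : LaurentPolynomial ℤ)) • p.1 + (T 1 : LaurentPolynomial ℤ) • q.1 + freeMQ.e z p.2 - freeMQ.e z q.2, q.2)

/-- The left division `(a,i) \ (b,j) = ((1-t⁻¹)·a + t⁻¹·(b + e_j - e_i), j)` on `M × X`. -/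
noncomputable def freeMQ.ld {X : Type*} [DecidableEq X] (z : X)
    (p q : ({x : X // x ≠ z} →₀ LaurentPolynomial ℤ) × X) :
    ({x : X // x ≠ z} →₀ LaurentPolynomial ℤ) × X :=
  (((1 - T (-1) : LaurentPolynomial ℤ)) • p.1 + (T (-1) : LaurentPolynomial ℤ) • (q.1 + freeMQ.e z q.2 - freeMQ.e z p.2), q.2)


lemma freeMQ.key {X : Type*} [DecidableEq X] (z : X)
    (a b c : {x : X // x ≠ z} →₀ LaurentPolynomial ℤ) (i j k : X) :
    freeMQ.op z (a, i) (freeMQ.ld z (b, j) (c, k)) =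
      (c + ((1 - T 1 : LaurentPolynomial ℤ)) • (a - b) + freeMQ.e z i - freeMQ.e z j, k) := by
  have hsr : (T 1 : LaurentPolynomial ℤ) * T (-1) = 1 := by
    rw [← T_add]; norm_num
  refine Prod.ext ?_ rfl
  show (1 - T 1 : LaurentPolynomial ℤ) • a +
      (T 1 : LaurentPolynomial ℤ) • ((1 - T (-1) : LaurentPolynomial ℤ) • b +
        (T (-1) : LaurentPolynomial ℤ) • (c + freeMQ.e z k - freeMQ.e z j)) +
      freeMQ.e z i - freeMQ.e z k = _
  rw [smul_add, smul_smul, smul_smul, hsr, mul_sub, mul_one, hsr, one_smul]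
  module

noncomputable def freeMQ.transSubgroup {X : Type*} [DecidableEq X] (z : X) :
    Subgroup (Equiv.Perm (({x : X // x ≠ z} →₀ LaurentPolynomial ℤ) × X)) where
  carrier := {g | ∃ m, ∀ (c : {x : X // x ≠ z} →₀ LaurentPolynomial ℤ) (k : X), g (c, k) = (c + m, k)}
  one_mem' := ⟨0, fun c k => by simp⟩
  mul_mem' := by
    rintro g h ⟨m, hm⟩ ⟨n, hn⟩
    exact ⟨n + m, fun c k => by simp [Equiv.Perm.mul_apply, hn, hm, add_assoc]⟩
  inv_mem' := by
    rintro g ⟨m, hm⟩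
    refine ⟨-m, fun c k => ?_⟩
    have : g (c + -m, k) = (c, k) := by rw [hm]; simp
    rw [← this, Equiv.Perm.inv_def, Equiv.symm_apply_apply]

lemma freeMQ.closure_le {X : Type*} [DecidableEq X] (z : X) :
    Subgroup.closure {h : Equiv.Perm (({x : X // x ≠ z} →₀ LaurentPolynomial ℤ) × X) |
        ∃ u v, ∀ p, h p = freeMQ.op z u (freeMQ.ld z v p)} ≤ freeMQ.transSubgroup z := by
  rw [Subgroup.closure_le]
  rintro h ⟨u, v, huv⟩
  exact ⟨(1 - T 1 : LaurentPolynomial ℤ) • (u.1 - v.1) + freeMQ.e z u.2 - freeMQ.e z v.2,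
    fun c k => by rw [huv (c, k)]; rw [show u = (u.1, u.2) from rfl, show v = (v.1, v.2) from rfl,
      freeMQ.key]; simp [add_assoc, add_sub_assoc]⟩

/-- In `F = M × X`: `L_{(a,i)} L_{(b,j)}⁻¹ ((c,k)) = (c + (1-t)·(a-b) + e_i - e_j, k)`;
the displacement group acts freely on `F`, and acts on each fiber `M × {k}` by
translations of `M`. -/
theorem freeMQ_displacement_action {X : Type*} [DecidableEq X] (z : X) :
    (∀ (a b c : {x : X // x ≠ z} →₀ LaurentPolynomial ℤ) (i j k : X),
      freeMQ.op z (a, i) (freeMQ.ld z (b, j) (c, k)) =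
        (c + ((1 - T 1 : LaurentPolynomial ℤ)) • (a - b) + freeMQ.e z i - freeMQ.e z j, k)) ∧
    (∀ g ∈ Subgroup.closure {h : Equiv.Perm (({x : X // x ≠ z} →₀ LaurentPolynomial ℤ) × X) |
        ∃ u v, ∀ p, h p = freeMQ.op z u (freeMQ.ld z v p)},
      (∃ p, g p = p) → g = 1) ∧
    (∀ g ∈ Subgroup.closure {h : Equiv.Perm (({x : X // x ≠ z} →₀ LaurentPolynomial ℤ) × X) |
        ∃ u v, ∀ p, h p = freeMQ.op z u (freeMQ.ld z v p)},
      ∃ m : {x : X // x ≠ z} →₀ LaurentPolynomial ℤ,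
        ∀ (c : {x : X // x ≠ z} →₀ LaurentPolynomial ℤ) (k : X), g (c, k) = (c + m, k)) := by
  refine ⟨freeMQ.key z, ?_, fun g hg => freeMQ.closure_le z hg⟩
  rintro g hg ⟨p, hp⟩
  obtain ⟨m, hm⟩ := freeMQ.closure_le z hg
  have h1 : g (p.1, p.2) = (p.1 + m, p.2) := hm p.1 p.2
  rw [Prod.mk.eta, hp] at h1
  have hm0 : m = 0 := by
    have := congrArg Prod.fst h1
    simpa using this.symm
  refine Equiv.ext fun q => ?_
  rw [show q = (q.1, q.2) from rfl, hm, hm0]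
  simp
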